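/- Let J be a non-compact well-ordered space. If K ⊆ J is almost closed in J ∪ {∞_J} and L ⊆ K is almost closed in K ∪ {∞_K} (identifying K ∪ {∞_K} with the closure of K in J ∪ {∞_J}), then L is almost closed in J ∪ {∞_J}. -/

import Mathlib

open Set Topology TopologicalSpace

universe u v w

/-- The order topology on `WithTop α`; for a noncompact well-ordered `α` with the order
topology, `WithTop α` with this topology is the one-point (Alexandroff) compactification
`α ∪ {∞_α}`, in which `⊤ = ∞_α` is the maximum. -/
noncomputable instance withTopOrderTopology {α : Type*} [Preorder α] :
    TopologicalSpace (WithTop α) := Preorder.topology _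

/-- `I` is almost closed in the ordered topological space `S`:
`closure I \ I = {ℓ}` where `ℓ = min {s ∈ S | I < s}`. -/
def AlmostClosedIn {S : Type*} [LinearOrder S] [TopologicalSpace S] (I : Set S) : Prop :=
  ∃ ℓ : S, closure I \ I = {ℓ} ∧ IsLeast {s : S | ∀ i ∈ I, i < s} ℓ

/-- `I ⊆ J` is almost closed in `J ∪ {∞_J}` (modeled as `WithTop J` with the order topology). -/
def AlmostClosed {J : Type*} [LinearOrder J] (I : Set J) : Prop :=
  AlmostClosedIn ((fun j : J => (j : WithTop J)) '' I)

/-- A subset `C ⊆ X` is `J`-closed: for every almost closed `I ⊆ J` and continuous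
`f : I ∪ {∞_I} → X` (where `I ∪ {∞_I} = WithTop ↥I` is the one-point compactification of
`I` with its internal order topology) with `f(I) ⊆ C` one has `f(∞_I) ∈ C`. -/
def JClosedSet (J : Type v) [LinearOrder J] (X : Type u) [TopologicalSpace X] (C : Set X) : Prop :=
  ∀ I : Set J, AlmostClosed I → ∀ f : WithTop ↥I → X, Continuous f →
    (∀ i : ↥I, f (WithTop.some i) ∈ C) → f ⊤ ∈ C

/-- `U ⊆ X` is `J`-open iff its complement is `J`-closed. -/
def JOpenSet (J : Type v) [LinearOrder J] (X : Type u) [TopologicalSpace X] (U : Set X) : Prop :=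
  JClosedSet J X Uᶜ

/-- `X` is a `J`-convergence space. -/
def IsJConvergence (J : Type v) [LinearOrder J] (X : Type u) [TopologicalSpace X] : Prop :=
  ∀ A : Set X, ¬ IsClosed A →
    ∃ I : Set J, AlmostClosed I ∧ ∃ f : WithTop ↥I → X, Continuous f ∧
      (∀ i : ↥I, f (WithTop.some i) ∈ A) ∧ f ⊤ ∉ A

/-- `JX`: the topology of `J`-open sets. -/
noncomputable def jTop (J : Type v) [LinearOrder J] (X : Type u) [tX : TopologicalSpace X] :
    TopologicalSpace X := generateFrom {U : Set X | JOpenSet J X U}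

/-- `K` is a compact Hausdorff witness for the failure of `A` to be closed. -/
def CGWitness (K : Type v) [tK : TopologicalSpace K] (X : Type u) [TopologicalSpace X]
    (A : Set X) : Prop :=
  CompactSpace K ∧ T2Space K ∧ ∃ f : K → X, Continuous f ∧ ¬ IsClosed (f ⁻¹' A)

/-- `X` is compactly generated. -/
def CompactlyGen.{v', u'} (X : Type u') [TopologicalSpace X] : Prop :=
  ∀ A : Set X, ¬ IsClosed A → ∃ (K : Type v') (tK : TopologicalSpace K), @CGWitness K tK X _ A

/-- `kX`: `U` is open iff `f ⁻¹ U` is open for every continuous map from a compact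
Hausdorff space. -/
def kTop.{v', u'} (X : Type u') [tX : TopologicalSpace X] : TopologicalSpace X :=
  generateFrom {U : Set X |
    ∀ (K : Type v') (tK : TopologicalSpace K), @CompactSpace K tK → @T2Space K tK →
      ∀ f : K → X, Continuous[tK, tX] f → IsOpen[tK] (f ⁻¹' U)}

/-- The directed topology on the successor `J' ∪ {∞} = WithTop J'`: generated by singletons
`{j}` and final segments `(j, ∞]` for `j ∈ J'`. -/
def directedTopology (J' : Type*) [Preorder J'] : TopologicalSpace (WithTop J') :=
  generateFrom {s : Set (WithTop J') |
    (∃ j : J', s = {WithTop.some j}) ∨ ∃ j : J', s = Ioi (WithTop.some j)}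

/-- `J'` witnesses transfinite convergence into `A`. -/
def TransfiniteWitness (J' : Type v) [LinearOrder J'] (X : Type u) [TopologicalSpace X]
    (A : Set X) : Prop :=
  WellFoundedLT J' ∧ Nonempty J' ∧ NoMaxOrder J' ∧
    ∃ f : WithTop J' → X, Continuous[directedTopology J', _] f ∧
      (∀ j : J', f (WithTop.some j) ∈ A) ∧ f ⊤ ∉ A

/-- `X` is a transfinite sequential space. -/
def TransfiniteSequential.{v', u'} (X : Type u') [TopologicalSpace X] : Prop :=
  ∀ A : Set X, ¬ IsClosed A →
    ∃ (J' : Type v') (lo : LinearOrder J'), @TransfiniteWitness J' lo X _ A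

/-- `X` is a `J`-unique convergence space. -/
def JUnique (J : Type v) [LinearOrder J] (X : Type u) [TopologicalSpace X] : Prop :=
  ∀ I : Set J, AlmostClosed I → ∀ f g : WithTop ↥I → X, Continuous f → Continuous g →
    (∀ i : ↥I, f (WithTop.some i) = g (WithTop.some i)) → f = g

/-- The set `M(X,Y)` of continuous maps between spaces with explicitly given topologies. -/
def Cts (X : Type u) (Y : Type w) (tX : TopologicalSpace X) (tY : TopologicalSpace Y) :=
  {f : X → Y // Continuous[tX, tY] f}

/-- The `𝒥`-open topology on `M(X,Y)`, generated by the sets `W(t,U)`. -/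
noncomputable def mjTop (J : Type v) [LinearOrder J] {X : Type u} {Y : Type w}
    (tX : TopologicalSpace X) (tY : TopologicalSpace Y) :
    TopologicalSpace (Cts X Y tX tY) :=
  generateFrom {W : Set (Cts X Y tX tY) |
    ∃ I : Set J, AlmostClosed I ∧ ∃ t : WithTop ↥I → X, Continuous[_, tX] t ∧
      ∃ U : Set Y, IsOpen[tY] U ∧ W = {f | ∀ z : WithTop ↥I, f.1 (t z) ∈ U}}

instance withTopOrderTopology' {α : Type*} [LinearOrder α] : OrderTopology (WithTop α) := ⟨rfl⟩

-- STATEMENT 2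
theorem stmt2 {J : Type v} [LinearOrder J] [WellFoundedLT J] [TopologicalSpace J]
    [OrderTopology J] [NoncompactSpace J] (K L : Set J) (hLK : L ⊆ K)
    (hK : AlmostClosed K)
    (hL : AlmostClosedIn {x : ↥(closure ((fun j : J => (j : WithTop J)) '' K)) |
      (x : WithTop J) ∈ (fun j : J => (j : WithTop J)) '' L}) :
    AlmostClosed L := by
  classical
  set S : Set (WithTop J) := closure ((fun j : J => (j : WithTop J)) '' K) with hS
  set L' : Set (WithTop J) := (fun j : J => (j : WithTop J)) '' L with hL'def
  obtain ⟨m, hm1, hm2⟩ := hL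
  have hLS : L' ⊆ S := fun x hx => subset_closure (Set.image_mono hLK hx)
  have hclLS : closure L' ⊆ S := closure_minimal hLS isClosed_closure
  have himg : (fun x : ↥S => (x : WithTop J)) '' {x : ↥S | (x : WithTop J) ∈ L'} = L' := by
    ext z
    constructor
    · rintro ⟨x, hx, rfl⟩; exact hx
    · intro hz; exact ⟨⟨z, hLS hz⟩, hz, rfl⟩
  have key : ∀ x : ↥S, ((x : WithTop J) ∈ closure L' ∧ (x : WithTop J) ∉ L') ↔ x = m := by
    intro x
    have hx := Set.ext_iff.mp hm1 x
    simp only [Set.mem_diff, Set.mem_singleton_iff, Set.mem_setOf_eq] at hx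
    rw [← hx]
    constructor
    · rintro ⟨h1, h2⟩
      refine ⟨closure_subtype.mpr ?_, h2⟩
      rwa [himg]
    · rintro ⟨h1, h2⟩
      refine ⟨?_, h2⟩
      have := closure_subtype.mp h1
      rwa [himg] at this
  refine ⟨(m : WithTop J), ?_, ?_, ?_⟩
  · ext z
    simp only [Set.mem_diff, Set.mem_singleton_iff]
    constructor
    · rintro ⟨hz1, hz2⟩
      have hzS : z ∈ S := hclLS hz1
      have := (key ⟨z, hzS⟩).mp ⟨hz1, hz2⟩
      exact congrArg Subtype.val this
    · rintro rfl
      exact (key m).mpr rfl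
  · intro i hi
    have : (⟨i, hLS hi⟩ : ↥S) < m := hm2.1 ⟨i, hLS hi⟩ hi
    exact Subtype.coe_lt_coe.mpr this
  · intro s hs
    have hmcl : (m : WithTop J) ∈ closure L' := ((key m).mpr rfl).1
    have hsub : L' ⊆ Set.Iic s := fun i hi => le_of_lt (hs i hi)
    exact closure_minimal hsub isClosed_Iic hmcl
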